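/- Let M be a compact metric space with Borel probability measure m, f : M → M Borel measurable, B ⊆ M Borel with B ⊆ f⁻¹(B), and K ⊆ M compact. If μ(K) = 1 for every measure μ ∈ O_{f|B} (the set of SRB-like measures for f|_B) and if L*(x) ⊆ O_{f|B} for m-a.e. x ∈ B, then for m-almost every x ∈ B and for every ε > 0, liminf_{n→∞} (1/n)·#{0 ≤ j ≤ n−1 : dist(f^j(x), K) < ε} = 1; i.e., B ⊆ B(K) up to an m-null set. -/

import Mathlib

open MeasureTheory Filter Metric Set
open scoped Classical ENNReal Topology NNReal

/-- Frequency of visits, up to time `n - 1`, of the orbit of `x` to the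
`ε`-neighborhood of `K`. -/
noncomputable def visitFreq {M : Type*} [MetricSpace M] (f : M → M) (K : Set M) (ε : ℝ)
    (x : M) (n : ℕ) : ℝ :=
  (((Finset.range n).filter (fun j => infDist (f^[j] x) K < ε)).card : ℝ) / n

/-- Basin of statistical attraction of `K`. -/
def statBasin {M : Type*} [MetricSpace M] (f : M → M) (K : Set M) : Set M :=
  {x | ∀ ε > 0, Tendsto (fun n => visitFreq f K ε x n) atTop (𝓝 1)}

/-- The empirical probability measure `ν_{n+1}(x) = (1/(n+1)) ∑_{j=0}^{n} δ_{f^j(x)}`. -/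
noncomputable def emp {M : Type*} [MeasurableSpace M] (f : M → M) (x : M) (n : ℕ) :
    ProbabilityMeasure M :=
  ⟨((n + 1 : ℝ≥0∞))⁻¹ • ∑ j ∈ Finset.range (n + 1), Measure.dirac (f^[j] x), by
    constructor
    simp [Measure.smul_apply, Measure.finset_sum_apply]
    exact ENNReal.inv_mul_cancel (by simp) (by simp)⟩

/-- The limit set `L*(x)`: all weak* limits of convergent subsequences of `ν_n(x)`. -/
def Lstar {M : Type*} [MetricSpace M] [MeasurableSpace M] [OpensMeasurableSpace M]
    (f : M → M) (x : M) : Set (ProbabilityMeasure M) :=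
  {μ | ∃ φ : ℕ → ℕ, StrictMono φ ∧ Tendsto (fun i => emp f x (φ i)) atTop (𝓝 μ)}

/-- `d` is a metric on the space of Borel probability measures inducing the weak* topology. -/
def IsWeakStarMetric {M : Type*} [MetricSpace M] [MeasurableSpace M] [OpensMeasurableSpace M]
    (d : ProbabilityMeasure M → ProbabilityMeasure M → ℝ) : Prop :=
  (∀ μ ν, 0 ≤ d μ ν) ∧ (∀ μ ν, d μ ν = d ν μ) ∧ (∀ μ ν, d μ ν = 0 ↔ μ = ν) ∧
    (∀ μ ν ρ, d μ ρ ≤ d μ ν + d ν ρ) ∧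
    (∀ (μ : ProbabilityMeasure M) (s : Set (ProbabilityMeasure M)),
      s ∈ 𝓝 μ ↔ ∃ ε > 0, {ν | d ν μ < ε} ⊆ s)

/-- `μ` is SRB-like (physical-like) for `f` restricted to `B`: for every `ε > 0` the basin of
`ε`-weak statistical attraction `{x ∈ B : dist*(L*(x), μ) < ε}` has positive `m`-measure. -/
def SRBlike {M : Type*} [MetricSpace M] [MeasurableSpace M] [OpensMeasurableSpace M]
    (m : Measure M) (f : M → M) (B : Set M)
    (d : ProbabilityMeasure M → ProbabilityMeasure M → ℝ) (μ : ProbabilityMeasure M) : Prop :=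
  ∀ ε > 0, 0 < m {x | x ∈ B ∧ ∃ ν ∈ Lstar f x, d ν μ < ε}

section SeqCompact
open TopologicalSpace

variable {M : Type*} [MetricSpace M] [CompactSpace M] [MeasurableSpace M] [BorelSpace M]

/-- Prokhorov-type sequential compactness for probability measures on a compact metric space. -/
lemma probabilityMeasure_exists_subseq_tendsto (μs : ℕ → ProbabilityMeasure M) :
    ∃ (φ : ℕ → ℕ) (μ : ProbabilityMeasure M), StrictMono φ ∧
      Tendsto (fun i => μs (φ i)) atTop (𝓝 μ) := by
  classical
  -- The integral functional
  set J : ProbabilityMeasure M → C(M, ℝ) → ℝ := fun ν g => ∫ x, g x ∂(ν : Measure M) with hJdef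
  have hint : ∀ (ν : ProbabilityMeasure M) (g : C(M, ℝ)),
      Integrable (fun x => g x) (ν : Measure M) := by
    intro ν g
    exact (BoundedContinuousFunction.mkOfCompact g).integrable (ν : Measure M)
  have habs : ∀ (ν : ProbabilityMeasure M) (g : C(M, ℝ)), |J ν g| ≤ ‖g‖ := by
    intro ν g
    have h := BoundedContinuousFunction.norm_integral_le_norm (ν : Measure M)
      (BoundedContinuousFunction.mkOfCompact g)
    simpa [BoundedContinuousFunction.norm_mkOfCompact, Real.norm_eq_abs] using h
  have hJsub : ∀ (ν : ProbabilityMeasure M) (g h : C(M, ℝ)), J ν g - J ν h = J ν (g - h) := by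
    intro ν g h
    simp only [hJdef]
    rw [← integral_sub (hint ν g) (hint ν h)]
    simp [ContinuousMap.sub_apply]
  have hlip : ∀ (ν : ProbabilityMeasure M) (g h : C(M, ℝ)), dist (J ν g) (J ν h) ≤ dist g h := by
    intro ν g h
    rw [Real.dist_eq, hJsub, dist_eq_norm]
    exact habs ν (g - h)
  haveI : Nonempty C(M, ℝ) := ⟨0⟩
  set u : ℕ → C(M, ℝ) := denseSeq C(M, ℝ) with hu
  have hdense : DenseRange u := denseRange_denseSeq _
  -- Bolzano–Weierstrass in the product space
  have hmem : ∀ n, (fun k => J (μs n) (u k)) ∈ Set.pi Set.univ (fun k => Icc (-‖u k‖) ‖u k‖) := by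
    intro n k _
    exact abs_le.mp (habs (μs n) (u k))
  obtain ⟨b, -, φ, hφ, hbconv⟩ :=
    (isCompact_univ_pi (fun k => isCompact_Icc)).tendsto_subseq hmem
  have hcoord : ∀ k, Tendsto (fun n => J (μs (φ n)) (u k)) atTop (𝓝 (b k)) := by
    intro k
    exact tendsto_pi_nhds.mp hbconv k
  -- Convergence of integrals for every continuous function, by density
  have hcauchy : ∀ g : C(M, ℝ), ∃ l, Tendsto (fun n => J (μs (φ n)) g) atTop (𝓝 l) := by
    intro g
    apply cauchySeq_tendsto_of_complete
    rw [Metric.cauchySeq_iff]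
    intro ε hε
    obtain ⟨k, hk⟩ := hdense.exists_dist_lt g (show (0:ℝ) < ε / 3 by linarith)
    obtain ⟨N, hN⟩ := Metric.cauchySeq_iff.mp (hcoord k).cauchySeq (ε / 3) (by linarith)
    refine ⟨N, fun m hm n hn => ?_⟩
    have h1 : dist (J (μs (φ m)) g) (J (μs (φ m)) (u k)) < ε / 3 :=
      lt_of_le_of_lt (hlip _ _ _) hk
    have h2 : dist (J (μs (φ n)) (u k)) (J (μs (φ n)) g) < ε / 3 :=
      lt_of_le_of_lt (hlip _ _ _) (by rwa [dist_comm] at hk)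
    have h3 : dist (J (μs (φ m)) (u k)) (J (μs (φ n)) (u k)) < ε / 3 := hN m hm n hn
    calc dist (J (μs (φ m)) g) (J (μs (φ n)) g)
        ≤ dist (J (μs (φ m)) g) (J (μs (φ m)) (u k)) +
            dist (J (μs (φ m)) (u k)) (J (μs (φ n)) (u k)) +
            dist (J (μs (φ n)) (u k)) (J (μs (φ n)) g) := dist_triangle4 _ _ _ _
      _ < ε / 3 + ε / 3 + ε / 3 := by linarith
      _ = ε := by ring
  choose L hL using hcauchy
  -- Properties of the limit functional
  have L_nonneg : ∀ g : C(M, ℝ), (∀ x, 0 ≤ g x) → 0 ≤ L g := by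
    intro g hg
    exact ge_of_tendsto (hL g) (Eventually.of_forall fun n => integral_nonneg fun x => hg x)
  have L_mono : ∀ g h : C(M, ℝ), (∀ x, g x ≤ h x) → L g ≤ L h := by
    intro g h hgh
    exact le_of_tendsto_of_tendsto (hL g) (hL h)
      (Eventually.of_forall fun n => integral_mono (hint _ g) (hint _ h) hgh)
  have L_one : L 1 = 1 := by
    have h1 : ∀ n, J (μs (φ n)) (1 : C(M, ℝ)) = 1 := by
      intro n
      simp [hJdef]
    refine tendsto_nhds_unique (hL 1) ?_
    simpa [h1] using (tendsto_const_nhds : Tendsto (fun _ : ℕ => (1:ℝ)) atTop (𝓝 1))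
  have L_add : ∀ g h : C(M, ℝ), L (g + h) = L g + L h := by
    intro g h
    refine tendsto_nhds_unique (hL (g + h)) ?_
    have : (fun n => J (μs (φ n)) (g + h)) =
        fun n => J (μs (φ n)) g + J (μs (φ n)) h := by
      funext n
      simp only [hJdef]
      rw [← integral_add (hint _ g) (hint _ h)]
      simp [ContinuousMap.add_apply]
    rw [this]
    exact (hL g).add (hL h)
  -- The Riesz content
  set T : Compacts M → Set ℝ :=
    fun K => L '' {g : C(M, ℝ) | (∀ x, 0 ≤ g x) ∧ ∀ x ∈ (K : Set M), 1 ≤ g x} with hT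
  have hTne : ∀ K, (T K).Nonempty := by
    intro K
    exact ⟨L 1, ⟨1, ⟨fun x => by simp, fun x _ => by simp⟩, rfl⟩⟩
  have hTbdd : ∀ K, BddBelow (T K) := by
    intro K
    refine ⟨0, ?_⟩
    rintro a ⟨g, hg, rfl⟩
    exact L_nonneg g hg.1
  set lam : Compacts M → ℝ := fun K => sInf (T K) with hlam
  have lam_nonneg : ∀ K, 0 ≤ lam K := by
    intro K
    refine le_csInf (hTne K) ?_
    rintro a ⟨g, hg, rfl⟩
    exact L_nonneg g hg.1
  have lam_le : ∀ (K : Compacts M) (g : C(M, ℝ)), (∀ x, 0 ≤ g x) →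
      (∀ x ∈ (K : Set M), 1 ≤ g x) → lam K ≤ L g := by
    intro K g h1 h2
    exact csInf_le (hTbdd K) ⟨g, ⟨h1, h2⟩, rfl⟩
  have lam_mono : ∀ K₁ K₂ : Compacts M, (K₁ : Set M) ⊆ K₂ → lam K₁ ≤ lam K₂ := by
    intro K₁ K₂ hsub
    refine le_csInf (hTne K₂) ?_
    rintro a ⟨g, hg, rfl⟩
    exact lam_le K₁ g hg.1 (fun x hx => hg.2 x (hsub hx))
  have hsupmem : ∀ (K₁ K₂ : Compacts M) (x : M),
      x ∈ ((K₁ ⊔ K₂ : Compacts M) : Set M) ↔ x ∈ (K₁ : Set M) ∪ (K₂ : Set M) := by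
    intro K₁ K₂ x
    rfl
  have lam_subadd : ∀ K₁ K₂ : Compacts M, lam (K₁ ⊔ K₂) ≤ lam K₁ + lam K₂ := by
    intro K₁ K₂
    have step : ∀ a ∈ T K₁, ∀ b ∈ T K₂, lam (K₁ ⊔ K₂) ≤ a + b := by
      rintro a ⟨g, hg, rfl⟩ b ⟨h, hh, rfl⟩
      rw [← L_add]
      refine lam_le _ (g + h) (fun x => by
        simp only [ContinuousMap.add_apply]
        exact add_nonneg (hg.1 x) (hh.1 x)) ?_
      intro x hx
      rcases (hsupmem K₁ K₂ x).mp hx with hx1 | hx2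
      · have := hg.2 x hx1
        have h0 := hh.1 x
        simp only [ContinuousMap.add_apply]
        linarith
      · have := hh.2 x hx2
        have h0 := hg.1 x
        simp only [ContinuousMap.add_apply]
        linarith
    have h2 : ∀ a ∈ T K₁, lam (K₁ ⊔ K₂) - a ≤ lam K₂ := by
      intro a ha
      refine le_csInf (hTne K₂) ?_
      intro b hb
      linarith [step a ha b hb]
    have h3 : lam (K₁ ⊔ K₂) - lam K₂ ≤ lam K₁ := by
      refine le_csInf (hTne K₁) ?_
      intro a ha
      linarith [h2 a ha]
    linarith
  have lam_superadd : ∀ K₁ K₂ : Compacts M, Disjoint (K₁ : Set M) (K₂ : Set M) →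
      lam K₁ + lam K₂ ≤ lam (K₁ ⊔ K₂) := by
    intro K₁ K₂ hdis
    obtain ⟨w, hw0, hw1, hw01⟩ :=
      exists_continuous_zero_one_of_isClosed K₂.2.isClosed K₁.2.isClosed hdis.symm
    refine le_csInf (hTne (K₁ ⊔ K₂)) ?_
    rintro c ⟨g, ⟨hg0, hg1⟩, rfl⟩
    have hfg : lam K₁ ≤ L (g * w) := by
      refine lam_le _ _ (fun x => by
        simp only [ContinuousMap.mul_apply]
        exact mul_nonneg (hg0 x) (hw01 x).1) ?_
      intro x hx
      have hwx : w x = 1 := hw1 hx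
      have hgx : 1 ≤ g x := hg1 x ((hsupmem K₁ K₂ x).mpr (Or.inl hx))
      simp only [ContinuousMap.mul_apply, hwx, mul_one]
      exact hgx
    have hfg' : lam K₂ ≤ L (g * (1 - w)) := by
      refine lam_le _ _ (fun x => by
        have := (hw01 x).2
        simp only [ContinuousMap.mul_apply, ContinuousMap.sub_apply, ContinuousMap.one_apply]
        have : (0:ℝ) ≤ 1 - w x := by linarith [(hw01 x).2]
        exact mul_nonneg (hg0 x) this) ?_
      intro x hx
      have hwx : w x = 0 := hw0 hx
      have hgx : 1 ≤ g x := hg1 x ((hsupmem K₁ K₂ x).mpr (Or.inr hx))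
      simp only [ContinuousMap.mul_apply, ContinuousMap.sub_apply, ContinuousMap.one_apply, hwx]
      simpa using hgx
    have key : L (g * w) + L (g * (1 - w)) = L g := by
      rw [← L_add]
      congr 1
      ext x
      simp only [ContinuousMap.add_apply, ContinuousMap.mul_apply, ContinuousMap.sub_apply,
        ContinuousMap.one_apply]
      ring
    linarith
  -- The content and its measure
  set Con : MeasureTheory.Content M :=
    { toFun := fun K => (lam K).toNNReal
      mono' := fun K₁ K₂ h => Real.toNNReal_mono (lam_mono K₁ K₂ h)
      sup_disjoint' := fun K₁ K₂ hd _ _ => by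
        have heq : lam (K₁ ⊔ K₂) = lam K₁ + lam K₂ :=
          le_antisymm (lam_subadd K₁ K₂) (lam_superadd K₁ K₂ hd)
        simp only [heq, Real.toNNReal_add (lam_nonneg K₁) (lam_nonneg K₂)]
      sup_le' := fun K₁ K₂ => by
        refine le_trans (Real.toNNReal_mono (lam_subadd K₁ K₂)) ?_
        rw [Real.toNNReal_add (lam_nonneg K₁) (lam_nonneg K₂)] } with hCon
  set κ := Con.measure with hκ
  have hlamtop : lam ⊤ = 1 := by
    apply le_antisymm
    · have h1 : L 1 ∈ T ⊤ := ⟨1, ⟨fun x => by simp, fun x _ => by simp⟩, rfl⟩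
      have := csInf_le (hTbdd ⊤) h1
      rwa [L_one] at this
    · refine le_csInf (hTne ⊤) ?_
      rintro a ⟨g, ⟨hg0, hg1⟩, rfl⟩
      calc (1:ℝ) = L 1 := L_one.symm
        _ ≤ L g := L_mono _ _ (fun x => by simpa using hg1 x (by trivial))
  have hκuniv : κ Set.univ = 1 := by
    rw [hκ, Content.measure_apply Con MeasurableSet.univ,
      Con.outerMeasure_of_isOpen Set.univ isOpen_univ]
    apply le_antisymm
    · refine le_trans (Con.innerContent_le ⟨Set.univ, isOpen_univ⟩ ⊤ (by
        intro x _
        trivial)) ?_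
      simp [hCon, hlamtop]
    · have h := Con.le_innerContent ⊤ ⟨Set.univ, isOpen_univ⟩ (subset_univ _)
      refine le_trans (le_of_eq ?_) h
      simp [hCon, hlamtop]
  haveI hκprob : IsProbabilityMeasure κ := ⟨hκuniv⟩
  refine ⟨φ, ⟨κ, hκprob⟩, hφ, ?_⟩
  apply MeasureTheory.tendsto_of_forall_isOpen_le_liminf
  intro G hG
  set r : ℝ≥0 := atTop.liminf (fun i => (μs (φ i)) G) with hr
  have hbdd1 : IsBoundedUnder (· ≤ ·) atTop (fun i => (μs (φ i)) G) :=
    isBoundedUnder_of ⟨1, fun i => ProbabilityMeasure.apply_le_one _ _⟩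
  have hliminf_coe : (r : ℝ) = atTop.liminf (fun i => ((μs (φ i)) G : ℝ)) := by
    rw [hr]
    refine Monotone.map_liminf_of_continuousAt (F := atTop) NNReal.coe_mono
      (fun i => (μs (φ i)) G) NNReal.continuous_coe.continuousAt
      (hbdd1.isCoboundedUnder_ge) (isBoundedUnder_of ⟨0, fun i => zero_le⟩)
  have hKle : ∀ Kc : Compacts M, (Kc : Set M) ⊆ G → ((Con Kc : ℝ≥0∞)) ≤ ((r : ℝ≥0) : ℝ≥0∞) := by
    intro Kc hsub
    obtain ⟨g, hg0, hg1, hg01⟩ := exists_continuous_zero_one_of_isClosed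
      hG.isClosed_compl Kc.2.isClosed
      (disjoint_left.mpr fun x hxc hxK => hxc (hsub hxK))
    have h1 : lam Kc ≤ L g :=
      lam_le _ _ (fun x => (hg01 x).1) (fun x hx => (hg1 hx).ge)
    have h2 : ∀ n, J (μs (φ n)) g ≤ ((μs (φ n)) G : ℝ) := by
      intro n
      have hind : ∀ x, g x ≤ G.indicator (fun _ => (1:ℝ)) x := by
        intro x
        by_cases hx : x ∈ G
        · simpa [Set.indicator_of_mem hx] using (hg01 x).2
        · rw [Set.indicator_of_notMem hx]
          exact le_of_eq (hg0 hx)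
      have hiind : Integrable (G.indicator (fun _ => (1:ℝ))) ((μs (φ n)) : Measure M) :=
        (integrable_const (1:ℝ)).indicator hG.measurableSet
      calc J (μs (φ n)) g
          ≤ ∫ x, G.indicator (fun _ => (1:ℝ)) x ∂((μs (φ n)) : Measure M) :=
            integral_mono (hint _ g) hiind hind
        _ = (((μs (φ n)) : Measure M) G).toReal := by
            rw [integral_indicator_const (1:ℝ) hG.measurableSet]; simp; rfl
        _ = ((μs (φ n)) G : ℝ) := rfl
    have h3 : L g ≤ (r : ℝ) := by
      rw [hliminf_coe, ← (hL g).liminf_eq]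
      refine liminf_le_liminf (Eventually.of_forall h2) ?_ ?_
      · exact isBoundedUnder_of ⟨-‖g‖, fun n => (abs_le.mp (habs _ _)).1⟩
      · exact IsBoundedUnder.isCoboundedUnder_ge
          (isBoundedUnder_of ⟨1, fun n => by
            exact_mod_cast ProbabilityMeasure.apply_le_one _ _⟩)
    have h4 : (lam Kc).toNNReal ≤ r := Real.toNNReal_le_iff_le_coe.mpr (h1.trans h3)
    exact ENNReal.coe_le_coe.mpr h4
  rw [← ENNReal.coe_le_coe]
  show (((show ProbabilityMeasure M from ⟨κ, hκprob⟩) G : ℝ≥0) : ℝ≥0∞) ≤ _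
  rw [ProbabilityMeasure.ennreal_coeFn_eq_coeFn_toMeasure]
  show κ G ≤ (r : ℝ≥0∞)
  rw [hκ, Content.measure_apply Con hG.measurableSet, Con.outerMeasure_of_isOpen G hG]
  exact iSup₂_le fun Kc hKc => hKle Kc hKc

end SeqCompact


/-- if every SRB-like measure for `f|_B` gives full measure to the compact set
`K`, and `L*(x) ⊆ O_{f|B}` for `m`-a.e. `x ∈ B`, then for `m`-a.e. `x ∈ B` the asymptotic
frequency of visits to every `ε`-neighborhood of `K` equals `1`; i.e. `B ⊆ B(K)` mod `m`. -/
theorem basin_contains_of_srbLike_full {M : Type*} [MetricSpace M] [CompactSpace M]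
    [MeasurableSpace M] [BorelSpace M] (m : Measure M) [IsProbabilityMeasure m]
    (f : M → M) (hf : Measurable f) (B : Set M) (hB : MeasurableSet B)
    (hBinv : B ⊆ f ⁻¹' B)
    (d : ProbabilityMeasure M → ProbabilityMeasure M → ℝ) (hd : IsWeakStarMetric d)
    (K : Set M) (hKc : IsCompact K)
    (hfull : ∀ μ : ProbabilityMeasure M, SRBlike m f B d μ → μ.toMeasure K = 1)
    (hae : ∀ᵐ x ∂m, x ∈ B → Lstar f x ⊆ {μ : ProbabilityMeasure M | SRBlike m f B d μ}) :
    ∀ᵐ x ∂m, x ∈ B → ∀ ε > 0,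
      atTop.liminf (fun n => visitFreq f K ε x n) = 1 := by
  filter_upwards [hae] with x hx
  intro hxB ε hε
  have hK1 : ∀ μ ∈ Lstar f x, μ.toMeasure K = 1 := fun μ hμ => hfull μ (hx hxB hμ)
  -- Urysohn function: 1 on K, 0 outside the ε-neighborhood of K
  set U : Set M := {y | infDist y K < ε} with hU
  have hUopen : IsOpen U := isOpen_lt (continuous_infDist_pt K) continuous_const
  have hKU : K ⊆ U := fun y hy => by
    simp only [hU, mem_setOf_eq, infDist_zero_of_mem hy]
    exact hε
  obtain ⟨ψ, hψ0, hψ1, hψ01⟩ := exists_continuous_zero_one_of_isClosed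
    hUopen.isClosed_compl hKc.isClosed (disjoint_left.mpr fun y hyU hyK => hyU (hKU hyK))
  set ψb := BoundedContinuousFunction.mkOfCompact ψ with hψb
  have hint : ∀ (ν : Measure M) [IsFiniteMeasure ν], Integrable (fun y => ψ y) ν := by
    intro ν _
    exact ψb.integrable ν
  have hμint : ∀ μ : ProbabilityMeasure M, μ.toMeasure K = 1 →
      ∫ y, ψ y ∂(μ : Measure M) = 1 := by
    intro μ hμK
    have hK : MeasurableSet K := hKc.isClosed.measurableSet
    apply le_antisymm
    · calc ∫ y, ψ y ∂(μ : Measure M) ≤ ∫ _y, (1:ℝ) ∂(μ : Measure M) :=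
          integral_mono (hint _) (integrable_const 1) (fun y => (hψ01 y).2)
      _ = 1 := by simp
    · have hind : ∫ y, K.indicator (fun _ => (1:ℝ)) y ∂(μ : Measure M) = 1 := by
        rw [integral_indicator_const (1:ℝ) hK]
        simp [hμK]
        rw [← ProbabilityMeasure.ennreal_coeFn_eq_coeFn_toMeasure] at hμK
        exact_mod_cast hμK
      rw [← hind]
      refine integral_mono ((integrable_const 1).indicator hK) (hint _) ?_
      intro y
      by_cases hy : y ∈ K
      · rw [Set.indicator_of_mem hy]
        exact le_of_eq (hψ1 hy).symm
      · rw [Set.indicator_of_notMem hy]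
        exact (hψ01 y).1
  -- the empirical integral is below the visit frequency
  have hemp : ∀ n : ℕ, ∫ y, ψ y ∂((emp f x n : ProbabilityMeasure M) : Measure M)
      ≤ visitFreq f K ε x (n+1) := by
    intro n
    have hcoe : ((emp f x n : ProbabilityMeasure M) : Measure M)
        = ((n + 1 : ℝ≥0∞))⁻¹ • ∑ j ∈ Finset.range (n + 1), Measure.dirac (f^[j] x) := rfl
    rw [hcoe, integral_smul_measure, integral_finset_sum_measure (fun j _ => hint _)]
    have hdirac : ∀ j ∈ Finset.range (n+1),
        ∫ y, ψ y ∂(Measure.dirac (f^[j] x)) = ψ (f^[j] x) :=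
      fun j _ => integral_dirac _ _
    rw [Finset.sum_congr rfl hdirac]
    have htoReal : ((n + 1 : ℝ≥0∞))⁻¹.toReal = ((n:ℝ) + 1)⁻¹ := by
      rw [ENNReal.toReal_inv]
      simp [ENNReal.toReal_add]
    have hsum : ∑ j ∈ Finset.range (n+1), ψ (f^[j] x)
        ≤ (((Finset.range (n+1)).filter (fun j => infDist (f^[j] x) K < ε)).card : ℝ) := by
      rw [Finset.card_filter]
      push_cast
      refine Finset.sum_le_sum fun j _ => ?_
      by_cases hj : infDist (f^[j] x) K < ε
      · simpa [hj] using (hψ01 (f^[j] x)).2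
      · have hmem : (f^[j] x) ∈ Uᶜ := by
          simp only [hU, mem_compl_iff, mem_setOf_eq]
          exact hj
        simp [hj, hψ0 hmem]
    have hcard : visitFreq f K ε x (n+1)
        = ((n:ℝ) + 1)⁻¹ *
          (((Finset.range (n+1)).filter (fun j => infDist (f^[j] x) K < ε)).card : ℝ) := by
      simp only [visitFreq]
      rw [div_eq_inv_mul]
      push_cast
      ring
    rw [htoReal, smul_eq_mul, hcard]
    exact mul_le_mul_of_nonneg_left hsum (by positivity)
  have hup : ∀ n, visitFreq f K ε x n ≤ 1 := by
    intro n
    apply div_le_one_of_le₀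
    · exact_mod_cast (Finset.card_filter_le _ _).trans (le_of_eq (Finset.card_range n))
    · positivity
  -- the frequencies tend to 1
  have htend : Tendsto (fun n => visitFreq f K ε x n) atTop (𝓝 1) := by
    apply tendsto_of_subseq_tendsto
    intro ns hns
    obtain ⟨ms₀, hms₀, hmono⟩ := strictMono_subseq_of_tendsto_atTop hns
    set w : ℕ → ℕ := fun i => ns (ms₀ (i+1)) with hwdef
    have hwmono : StrictMono w := fun i j hij => hmono (by omega : i + 1 < j + 1)
    have hwpos : ∀ i, 1 ≤ w i := by
      intro i
      have h0 : ns (ms₀ 0) < w i := hmono (Nat.succ_pos i)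
      omega
    set v : ℕ → ℕ := fun i => w i - 1 with hvdef
    have hvmono : StrictMono v := by
      intro i j hij
      have h1 := hwmono hij
      have h2 := hwpos i
      simp only [hvdef]
      omega
    obtain ⟨φ, μ, hφ, hconv⟩ := probabilityMeasure_exists_subseq_tendsto (fun i => emp f x (v i))
    have hμLstar : μ ∈ Lstar f x := ⟨v ∘ φ, hvmono.comp hφ, hconv⟩
    have hμ1 : ∫ y, ψ y ∂(μ : Measure M) = 1 := hμint μ (hK1 μ hμLstar)
    have hsame : ∀ ν : Measure M, ∫ y, ψb y ∂ν = ∫ y, ψ y ∂ν := by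
      intro ν
      simp [hψb]
    have hψconv : Tendsto
        (fun i => ∫ y, ψ y ∂((emp f x (v (φ i)) : ProbabilityMeasure M) : Measure M))
        atTop (𝓝 1) := by
      have h0 := ProbabilityMeasure.tendsto_iff_forall_integral_tendsto.mp hconv ψb
      rw [hsame, hμ1] at h0
      simpa [hsame] using h0
    refine ⟨fun i => ms₀ ((φ i) + 1), ?_⟩
    have hw1 : ∀ i, w (φ i) = v (φ i) + 1 := by
      intro i
      have := hwpos (φ i)
      simp only [hvdef]
      omega
    have hmain : Tendsto (fun i => visitFreq f K ε x (v (φ i) + 1)) atTop (𝓝 1) :=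
      tendsto_of_tendsto_of_tendsto_of_le_of_le hψconv tendsto_const_nhds
        (fun i => hemp (v (φ i))) (fun i => hup _)
    have heq : (fun i => visitFreq f K ε x (ns (ms₀ ((φ i) + 1))))
        = fun i => visitFreq f K ε x (v (φ i) + 1) := by
      funext i
      rw [show ns (ms₀ ((φ i) + 1)) = w (φ i) from rfl, hw1]
    rw [heq]
    exact hmain
  exact htend.liminf_eq
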